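/- Define H_{n,ℓ}(q) = q^{nℓ-n(n+1)/2} sum_{k: a_k >= ℓ} res_{t=q^{a_k}} F_ℓ(t) and H̃_{n,ℓ}(q) = q^{nℓ-n(n-1)/2} sum_{k: a_k <= ℓ-n} res_{t=q^{a_k}} G_ℓ(t), where F_ℓ(t) = prod_{s=0}^{n}(t-q^{a_s})^{-1} prod_{s=1}^{n}(t q^{s-ℓ}-1) and G_ℓ(t) = prod_{s=0}^{n}(t-q^{a_s})^{-1} prod_{s=0}^{n-1}(t q^{s-ℓ}-1). Then for all 0 <= ℓ <= a_n + n, H_{n,ℓ}(q) + H̃_{n,ℓ-1}(q) = 1. -/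

import Mathlib

open Finset

/-- `H_{n,ℓ}(q) = q^{nℓ-n(n+1)/2} ∑_{k : a_k ≥ ℓ} res_{t=q^{a_k}} F_ℓ(t)` with
`F_ℓ(t) = ∏_{s=0}^{n}(t-q^{a_s})⁻¹ ∏_{s=1}^{n}(t q^{s-ℓ}-1)`. -/
noncomputable def Hfun (q : ℝ) (n : ℕ) (a : ℕ → ℕ) (ℓ : ℤ) : ℝ :=
  q ^ ((n : ℤ) * ℓ - (n * (n + 1) / 2 : ℕ)) *
    ∑ k ∈ (Finset.range (n + 1)).filter (fun k => ℓ ≤ (a k : ℤ)),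
      (∏ s ∈ (Finset.range (n + 1)).erase k, (q ^ a k - q ^ a s))⁻¹ *
        ∏ s ∈ Finset.Icc 1 n, (q ^ (a k : ℤ) * q ^ ((s : ℤ) - ℓ) - 1)

/-- `H̃_{n,ℓ}(q) = q^{nℓ-n(n-1)/2} ∑_{k : a_k ≤ ℓ-n} res_{t=q^{a_k}} G_ℓ(t)` with
`G_ℓ(t) = ∏_{s=0}^{n}(t-q^{a_s})⁻¹ ∏_{s=0}^{n-1}(t q^{s-ℓ}-1)`. -/
noncomputable def Htilde (q : ℝ) (n : ℕ) (a : ℕ → ℕ) (ℓ : ℤ) : ℝ :=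
  q ^ ((n : ℤ) * ℓ - (n * (n - 1) / 2 : ℕ)) *
    ∑ k ∈ (Finset.range (n + 1)).filter (fun k => (a k : ℤ) ≤ ℓ - (n : ℤ)),
      (∏ s ∈ (Finset.range (n + 1)).erase k, (q ^ a k - q ^ a s))⁻¹ *
        ∏ s ∈ Finset.range n, (q ^ (a k : ℤ) * q ^ ((s : ℤ) - ℓ) - 1)

section Helpers

open Polynomial

-- zpow over sum
lemma zpow_sum_aux {q : ℝ} (hq : q ≠ 0) (s : Finset ℕ) (f : ℕ → ℤ) :
    ∏ i ∈ s, q ^ (f i) = q ^ (∑ i ∈ s, f i) := by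
  induction s using Finset.induction with
  | empty => simp
  | insert _ _ h ih => rw [Finset.prod_insert h, Finset.sum_insert h, zpow_add₀ hq, ih]

-- key Lagrange identity
lemma key (n : ℕ) (v : ℕ → ℝ) (hv : Set.InjOn v (Finset.range (n+1) : Finset ℕ))
    (c : ℕ → ℝ) (hc : ∀ s, c s ≠ 0) :
    ∑ k ∈ Finset.range (n+1),
      (∏ s ∈ (Finset.range (n+1)).erase k, (v k - v s))⁻¹ *
        ∏ s ∈ Finset.Icc 1 n, (v k * c s - 1)
    = ∏ s ∈ Finset.Icc 1 n, c s := by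
  set P : ℝ[X] := ∏ s ∈ Finset.Icc 1 n, (C (c s) * X + C (-1)) with hP
  have hcard : (Finset.range (n+1)).card = n + 1 := Finset.card_range _
  have hdeg : P.degree < (Finset.range (n+1)).card := by
    rw [hcard]
    refine lt_of_le_of_lt (Polynomial.degree_prod_le _ _) ?_
    refine lt_of_le_of_lt (Finset.sum_le_card_nsmul _ _ 1 fun s _ => degree_linear_le) ?_
    simp [Nat.card_Icc]
    exact_mod_cast Nat.lt_succ_self n
  have hinterp := Lagrange.eq_interpolate (f := P) hv hdeg
  -- coeff n of P
  have hPcoeff : P.coeff n = ∏ s ∈ Finset.Icc 1 n, c s := by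
    have hne : ∀ s ∈ Finset.Icc 1 n, C (c s) * X + C (-1) ≠ 0 := by
      intro s _
      intro h
      have := natDegree_linear (b := (-1:ℝ)) (hc s)
      rw [h] at this; simp at this
    have hnd : P.natDegree = n := by
      rw [hP, Polynomial.natDegree_prod _ _ hne]
      rw [Finset.sum_congr rfl fun s _ => natDegree_linear (b := (-1:ℝ)) (hc s)]
      simp [Nat.card_Icc]
    have h2 := Polynomial.coeff_natDegree (p := P)
    rw [hnd] at h2
    rw [h2, hP, Polynomial.leadingCoeff_prod]
    exact Finset.prod_congr rfl fun s _ => leadingCoeff_linear (hc s)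
  -- coeff n of interpolate
  have hIcoeff : (Lagrange.interpolate (Finset.range (n+1)) v fun i => P.eval (v i)).coeff n
      = ∑ k ∈ Finset.range (n+1),
        (∏ s ∈ (Finset.range (n+1)).erase k, (v k - v s))⁻¹ *
          ∏ s ∈ Finset.Icc 1 n, (v k * c s - 1) := by
    rw [Lagrange.interpolate_apply, Polynomial.finset_sum_coeff]
    refine Finset.sum_congr rfl fun k hk => ?_
    rw [Polynomial.coeff_C_mul]
    have hb : (Lagrange.basis (Finset.range (n+1)) v k).coeff n
        = (∏ s ∈ (Finset.range (n+1)).erase k, (v k - v s))⁻¹ := by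
      have hnd := Lagrange.natDegree_basis hv hk
      rw [hcard] at hnd
      simp only [Nat.add_sub_cancel] at hnd
      have h2 := Polynomial.coeff_natDegree (p := Lagrange.basis (Finset.range (n+1)) v k)
      rw [hnd] at h2
      rw [h2, Lagrange.basis, Polynomial.leadingCoeff_prod]
      rw [← Finset.prod_inv_distrib]
      refine Finset.prod_congr rfl fun j hj => ?_
      rw [Lagrange.basisDivisor, Polynomial.leadingCoeff_mul, Polynomial.leadingCoeff_C,
        (Polynomial.monic_X_sub_C _).leadingCoeff, mul_one]
    rw [hb]
    have hev : P.eval (v k) = ∏ s ∈ Finset.Icc 1 n, (v k * c s - 1) := by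
      rw [hP, Polynomial.eval_prod]
      refine Finset.prod_congr rfl fun s _ => ?_
      simp only [Polynomial.eval_add, Polynomial.eval_mul, Polynomial.eval_C, Polynomial.eval_X]
      ring
    rw [hev, mul_comm]
  rw [← hPcoeff, hinterp, hIcoeff]

end Helpers

/-- For a strictly increasing integer sequence `a_0 = 0 < … < a_n`, `q > 0` not a root of
unity, and all `0 ≤ ℓ ≤ a_n + n`, one has `H_{n,ℓ}(q) + H̃_{n,ℓ-1}(q) = 1`. -/
theorem stmt14 (n : ℕ) (a : ℕ → ℕ) (ha0 : a 0 = 0) (hmono : StrictMono a)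
    (q : ℝ) (hq0 : 0 < q) (hq : ∀ m : ℕ, 0 < m → q ^ m ≠ 1)
    (ℓ : ℤ) (hℓ0 : 0 ≤ ℓ) (hℓ1 : ℓ ≤ (a n : ℤ) + n) :
    Hfun q n a ℓ + Htilde q n a (ℓ - 1) = 1 := by
  have hqne : q ≠ 0 := ne_of_gt hq0
  have hpow1 : ∀ i j : ℕ, i < j → q ^ i ≠ q ^ j := by
    intro i j hij h
    have h2 : q ^ i * 1 = q ^ i * q ^ (j - i) := by
      rw [mul_one, ← pow_add, h]; congr 1; omega
    have h3 := mul_left_cancel₀ (pow_ne_zero i hqne) h2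
    exact hq (j - i) (by omega) h3.symm
  have hv : Set.InjOn (fun k => q ^ a k) ((Finset.range (n+1) : Finset ℕ) : Set ℕ) := by
    intro i _ j _ h
    rcases lt_trichotomy (a i) (a j) with h1 | h1 | h1
    · exact absurd h (hpow1 _ _ h1)
    · exact hmono.injective h1
    · exact absurd h.symm (hpow1 _ _ h1)
  have hc : ∀ s : ℕ, (q ^ ((s:ℤ) - ℓ)) ≠ 0 := fun s => zpow_ne_zero _ hqne
  -- Gauss sums
  have hA : 2 * (n * (n - 1) / 2) = n * (n - 1) :=
    Nat.two_mul_div_two_of_even (Nat.even_mul_pred_self n)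
  have hB : 2 * (n * (n + 1) / 2) = n * (n + 1) :=
    Nat.two_mul_div_two_of_even (Nat.even_mul_succ_self n)
  have hAB : n * (n + 1) / 2 = n * (n - 1) / 2 + n := by
    rcases n with _ | m
    · simp
    · have : (m+1) * (m+1+1) = (m+1) * (m+1-1) + 2 * (m+1) := by simp; ring
      omega
  -- prefactor exponent equality
  have hexp : ((n:ℤ) * (ℓ-1) - (n*(n-1)/2 : ℕ)) = ((n:ℤ) * ℓ - (n*(n+1)/2 : ℕ)) := by
    rw [hAB]; push_cast; ring
  -- product reindexing
  have hprod : ∀ k : ℕ, ∏ s ∈ Finset.range n, (q ^ (a k) * q ^ ((s:ℤ) - (ℓ-1)) - 1)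
      = ∏ s ∈ Finset.Icc 1 n, (q ^ (a k) * q ^ ((s:ℤ) - ℓ) - 1) := by
    intro k
    rw [← Finset.Ico_add_one_right_eq_Icc, Finset.prod_Ico_eq_prod_range]
    refine Finset.prod_congr rfl fun i _ => ?_
    congr 2
    push_cast; ring
  unfold Hfun Htilde
  rw [hexp]
  simp only [zpow_natCast, hprod]
  rw [← mul_add]
  -- extend the second sum
  set f : ℕ → ℝ := fun k =>
    (∏ s ∈ (Finset.range (n+1)).erase k, (q ^ a k - q ^ a s))⁻¹ *
      ∏ s ∈ Finset.Icc 1 n, (q ^ a k * q ^ ((s:ℤ) - ℓ) - 1) with hfdef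
  have hextend : ∑ k ∈ (Finset.range (n+1)).filter (fun k => (a k : ℤ) ≤ ℓ - 1 - (n:ℤ)), f k
      = ∑ k ∈ (Finset.range (n+1)).filter (fun k => ¬ ℓ ≤ (a k : ℤ)), f k := by
    refine Finset.sum_subset ?_ ?_
    · intro k hk
      simp only [Finset.mem_filter] at hk ⊢
      exact ⟨hk.1, by omega⟩
    · intro k hk hnk
      simp only [Finset.mem_filter, not_and] at hk hnk
      have h4 : ¬ ((a k:ℤ) ≤ ℓ - 1 - (n:ℤ)) := hnk hk.1
      have hrange : 1 ≤ ℓ - (a k : ℤ) ∧ ℓ - (a k : ℤ) ≤ n := by omega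
      set s₀ : ℕ := (ℓ - (a k : ℤ)).toNat with hs₀
      have hs₀m : s₀ ∈ Finset.Icc 1 n := by
        simp only [Finset.mem_Icc]; omega
      have hzero : q ^ a k * q ^ ((s₀:ℤ) - ℓ) - 1 = 0 := by
        have : (q:ℝ) ^ a k * q ^ ((s₀:ℤ) - ℓ) = q ^ ((a k : ℤ) + ((s₀:ℤ) - ℓ)) := by
          rw [zpow_add₀ hqne, zpow_natCast]
        rw [this]
        have he : (a k : ℤ) + ((s₀:ℤ) - ℓ) = 0 := by omega
        rw [he, zpow_zero, sub_self]
      rw [hfdef]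
      simp only
      rw [Finset.prod_eq_zero hs₀m hzero, mul_zero]
  rw [hextend, Finset.sum_filter_add_sum_filter_not]
  rw [key n (fun k => q ^ a k) hv (fun s => q ^ ((s:ℤ) - ℓ)) hc]
  rw [zpow_sum_aux hqne]
  rw [← zpow_add₀ hqne]
  have : ((n:ℤ) * ℓ - (n*(n+1)/2 : ℕ)) + ∑ i ∈ Finset.Icc 1 n, ((i:ℤ) - ℓ) = 0 := by
    rw [Finset.sum_sub_distrib, Finset.sum_const, Nat.card_Icc]
    have hS : ∑ i ∈ Finset.Icc 1 n, (i:ℤ) = ((n*(n+1)/2 : ℕ) : ℤ) := by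
      rw [← Nat.cast_sum]
      congr 1
      have := Finset.sum_range_id_mul_two (n+1)
      have h0 : Finset.Icc 1 n = (Finset.range (n+1)).erase 0 := by
        ext x; simp; omega
      rw [h0]
      have h1 : ∑ x ∈ (Finset.range (n+1)).erase 0, x = ∑ x ∈ Finset.range (n+1), x :=
        Finset.sum_erase _ rfl
      rw [h1, Finset.sum_range_id]
      simp [Nat.mul_comm]
    rw [hS]
    simp only [Nat.add_sub_cancel, nsmul_eq_mul]
    push_cast
    ring
  rw [this, zpow_zero]
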